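/- For integers x and y, |q(x,y)| = 1 if and only if there exist an integer t and a sign ε ∈ {1,-1} such that (x,y) = (ε·f(t), ε·f(t+2)) or (x,y) = (ε·f(t+2), ε·f(t)). -/

import Mathlib

def q (x y : ℤ) : ℤ := x ^ 2 + y ^ 2 - 3 * x * y

lemma fib_step (f : ℤ → ℤ) (hrec : ∀ n : ℤ, f (n + 1) = f n + f (n - 1))
    (n : ℤ) : f (n + 2) = f (n + 1) + f n := by
  have h := hrec (n + 1)
  have e1 : n + 1 + 1 = n + 2 := by ring
  have e2 : n + 1 - 1 = n := by ring
  rw [e1, e2] at h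
  exact h

lemma fib_jump (f : ℤ → ℤ) (hrec : ∀ n : ℤ, f (n + 1) = f n + f (n - 1))
    (t : ℤ) : f (t + 4) = 3 * f (t + 2) - f t := by
  have s1 := fib_step f hrec t
  have s2 := fib_step f hrec (t+1)
  have s3 := fib_step f hrec (t+2)
  have e2 : t+1+2 = t+3 := by ring
  have e2' : t+1+1 = t+2 := by ring
  have e3 : t+2+2 = t+4 := by ring
  have e3' : t+2+1 = t+3 := by ring
  rw [e2, e2'] at s2; rw [e3, e3'] at s3
  linarith

lemma fib_sign (f : ℤ → ℤ) (h0 : f 0 = 0) (h1 : f 1 = 1)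
    (hrec : ∀ n : ℤ, f (n + 1) = f n + f (n - 1)) :
    ∀ t : ℤ, f (t+1)^2 - f (t+1) * f t - f t ^ 2 = 1 ∨
    f (t+1)^2 - f (t+1) * f t - f t ^ 2 = -1 := by
  intro t
  induction t using Int.induction_on with
  | zero => simp [h0, h1]
  | succ i hi =>
    have hs : f ((i:ℤ) + 2) = f ((i:ℤ) + 1) + f i := fib_step f hrec i
    have e : ((i:ℤ) + 1) + 1 = (i:ℤ) + 2 := by ring
    rw [e, hs]
    rcases hi with h | h
    · right; linear_combination -h
    · left; linear_combination -h
  | pred i hi =>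
    have hs : f (-(i:ℤ) + 1) = f (-(i:ℤ)) + f (-(i:ℤ) - 1) := by
      have h := hrec (-(i:ℤ))
      simpa using h
    have e1 : (-(i:ℤ) - 1) + 1 = -(i:ℤ) := by ring
    have e2 : f (-(i:ℤ) - 1) = f (-(i:ℤ) + 1) - f (-(i:ℤ)) := by linarith
    rw [e1, e2]
    rcases hi with h | h
    · right; linear_combination -h
    · left; linear_combination -h

lemma q_fib (f : ℤ → ℤ) (h0 : f 0 = 0) (h1 : f 1 = 1)
    (hrec : ∀ n : ℤ, f (n + 1) = f n + f (n - 1)) (t : ℤ) :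
    q (f t) (f (t+2)) = 1 ∨ q (f t) (f (t+2)) = -1 := by
  have hs : f (t + 2) = f (t + 1) + f t := fib_step f hrec t
  rcases fib_sign f h0 h1 hrec t with h | h
  · left; simp only [q]; rw [hs]; linear_combination h
  · right; simp only [q]; rw [hs]; linear_combination h

lemma core (f : ℤ → ℤ) (h0 : f 0 = 0) (h1 : f 1 = 1)
    (hrec : ∀ n : ℤ, f (n + 1) = f n + f (n - 1)) :
    ∀ n : ℕ, ∀ x y : ℤ, 0 ≤ x → x ≤ y → y ≤ (n : ℤ) → |q x y| = 1 →
    ∃ t : ℤ, (x = f t ∧ y = f (t+2)) ∨ (x = f (t+2) ∧ y = f t) := by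
  intro n
  induction n using Nat.strong_induction_on with
  | _ n ih =>
  intro x y hx hle hyn habs
  have hq : q x y = 1 ∨ q x y = -1 := by
    rcases abs_eq (by norm_num : (0:ℤ) ≤ 1) |>.mp habs with h | h
    · exact Or.inl h
    · exact Or.inr h
  have hf2 : f 2 = 1 := by
    have h := fib_step f hrec 0
    norm_num [h0, h1] at h
    omega
  have hfm1 : f (-1) = 1 := by
    have h := hrec 0
    norm_num [h0, h1] at h
    omega
  rcases eq_or_lt_of_le hx with hx0 | hx1
  · have hx0' : x = 0 := hx0.symm
    subst hx0'
    have hy1 : y = 1 := by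
      simp only [q] at hq
      rcases hq with h | h <;> nlinarith [hle]
    subst hy1
    exact ⟨0, Or.inl ⟨h0.symm, by norm_num [hf2]⟩⟩
  · rcases eq_or_lt_of_le (show (1:ℤ) ≤ x by omega) with hx1' | hx2
    · have hx1'' : x = 1 := hx1'.symm
      subst hx1''
      have hy : y = 1 ∨ y = 2 ∨ y = 3 := by
        simp only [q] at hq
        rcases hq with h | h
        · have h' : y * (y - 3) = 0 := by nlinarith
          rcases mul_eq_zero.mp h' with h'' | h'' <;> omega
        · have h' : (y - 1) * (y - 2) = 0 := by nlinarith
          rcases mul_eq_zero.mp h' with h'' | h'' <;> omega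
      have h3 : f 3 = 2 := by
        have h := fib_step f hrec 1
        norm_num [h1, hf2] at h; omega
      have h4 : f 4 = 3 := by
        have h := fib_step f hrec 2
        norm_num [hf2, h3] at h; omega
      rcases hy with hy | hy | hy <;> subst hy
      · exact ⟨-1, Or.inl ⟨hfm1.symm, by norm_num [h1]⟩⟩
      · exact ⟨1, Or.inl ⟨h1.symm, by norm_num [h3]⟩⟩
      · exact ⟨2, Or.inl ⟨hf2.symm, by norm_num [h4]⟩⟩
    · have hx2' : 2 ≤ x := hx2
      have hxy : x + 1 ≤ y := by
        rcases eq_or_lt_of_le hle with h | h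
        · exfalso
          subst h
          simp only [q] at hq
          rcases hq with h | h <;> nlinarith
        · omega
      set z := 3 * x - y with hz
      have hqz : q z x = q x y := by simp only [q, hz]; ring
      have hzy : z * y = x ^ 2 - q x y := by simp only [q, hz]; ring
      have hz1 : 1 ≤ z := by
        by_contra h
        push_neg at h
        have hz0 : z ≤ 0 := by omega
        have hneg : z * y ≤ 0 := mul_nonpos_of_nonpos_of_nonneg hz0 (by omega)
        rcases hq with h' | h' <;> nlinarith
      have hzx : z ≤ x := by
        by_contra h
        push_neg at h
        have hge : (x + 1) * y ≤ z * y :=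
          mul_le_mul_of_nonneg_right (by omega) (by omega)
        rcases hq with h' | h' <;> nlinarith
      have habs' : |q z x| = 1 := by rw [hqz]; exact habs
      have hxn : x ≤ ((n - 1 : ℕ) : ℤ) := by omega
      have hlt : n - 1 < n := by omega
      obtain ⟨t, ht⟩ := ih (n - 1) hlt z x (by omega) hzx hxn habs'
      rcases ht with ⟨hzt, hxt⟩ | ⟨hzt, hxt⟩
      · refine ⟨t + 2, Or.inl ⟨hxt, ?_⟩⟩
        have hj := fib_jump f hrec t
        have e : t + 2 + 2 = t + 4 := by ring
        rw [e, hj]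
        omega
      · refine ⟨t - 2, Or.inr ⟨?_, ?_⟩⟩
        · have e : t - 2 + 2 = t := by ring
          rw [e]; exact hxt
        · have hj := fib_jump f hrec (t - 2)
          have e1 : t - 2 + 4 = t + 2 := by ring
          have e2 : t - 2 + 2 = t := by ring
          rw [e1, e2] at hj
          omega

theorem abs_q_eq_one_iff_fib_pair (f : ℤ → ℤ) (h0 : f 0 = 0) (h1 : f 1 = 1)
    (hrec : ∀ n : ℤ, f (n + 1) = f n + f (n - 1)) (x y : ℤ) :
    |q x y| = 1 ↔
      ∃ (t : ℤ) (ε : ℤ), (ε = 1 ∨ ε = -1) ∧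
        ((x = ε * f t ∧ y = ε * f (t + 2)) ∨ (x = ε * f (t + 2) ∧ y = ε * f t)) := by
  constructor
  · intro hq
    have main : ∀ a b : ℤ, 0 < a → 0 < b → |q a b| = 1 →
        ∃ t : ℤ, (a = f t ∧ b = f (t+2)) ∨ (a = f (t+2) ∧ b = f t) := by
      intro a b ha hb h
      rcases le_total a b with hab | hab
      · exact core f h0 h1 hrec b.toNat a b ha.le hab (by omega) h
      · have hsym : |q b a| = 1 := by
          have e : q b a = q a b := by simp only [q]; ring
          rw [e]; exact h
        obtain ⟨t, ht⟩ := core f h0 h1 hrec a.toNat b a hb.le hab (by omega) hsym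
        rcases ht with ⟨ha', hb'⟩ | ⟨ha', hb'⟩
        · exact ⟨t, Or.inr ⟨hb', ha'⟩⟩
        · exact ⟨t, Or.inl ⟨hb', ha'⟩⟩
    have hf2 : f 2 = 1 := by
      have h := fib_step f hrec 0
      norm_num [h0, h1] at h
      omega
    rcases lt_trichotomy x 0 with hx | hx | hx
    · rcases lt_trichotomy y 0 with hy | hy | hy
      · have h' : |q (-x) (-y)| = 1 := by
          have e : q (-x) (-y) = q x y := by simp only [q]; ring
          rw [e]; exact hq
        obtain ⟨t, ht⟩ := main (-x) (-y) (by omega) (by omega) h'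
        refine ⟨t, -1, Or.inr rfl, ?_⟩
        rcases ht with ⟨ha, hb⟩ | ⟨ha, hb⟩
        · exact Or.inl ⟨by omega, by omega⟩
        · exact Or.inr ⟨by omega, by omega⟩
      · subst hy
        have hx1 : x = -1 := by
          simp only [q] at hq
          rcases abs_eq (by norm_num : (0:ℤ) ≤ 1) |>.mp hq with h | h <;> nlinarith
        subst hx1
        exact ⟨0, -1, Or.inr rfl, Or.inr ⟨by norm_num [hf2], by norm_num [h0]⟩⟩
      · exfalso
        have hle : q x y ≤ 1 := hq ▸ le_abs_self _
        simp only [q] at hle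
        nlinarith
    · subst hx
      have hy : y = 1 ∨ y = -1 := by
        simp only [q] at hq
        rcases abs_eq (by norm_num : (0:ℤ) ≤ 1) |>.mp hq with h | h
        · have h' : (y - 1) * (y + 1) = 0 := by nlinarith
          rcases mul_eq_zero.mp h' with h'' | h'' <;> omega
        · nlinarith
      rcases hy with hy | hy <;> subst hy
      · exact ⟨0, 1, Or.inl rfl, Or.inl ⟨by norm_num [h0], by norm_num [hf2]⟩⟩
      · exact ⟨0, -1, Or.inr rfl, Or.inl ⟨by norm_num [h0], by norm_num [hf2]⟩⟩
    · rcases lt_trichotomy y 0 with hy | hy | hy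
      · exfalso
        have hle : q x y ≤ 1 := hq ▸ le_abs_self _
        simp only [q] at hle
        nlinarith
      · subst hy
        have hx1 : x = 1 := by
          simp only [q] at hq
          rcases abs_eq (by norm_num : (0:ℤ) ≤ 1) |>.mp hq with h | h <;> nlinarith
        subst hx1
        exact ⟨0, 1, Or.inl rfl, Or.inr ⟨by norm_num [hf2], by norm_num [h0]⟩⟩
      · obtain ⟨t, ht⟩ := main x y hx hy hq
        refine ⟨t, 1, Or.inl rfl, ?_⟩
        rcases ht with ⟨ha, hb⟩ | ⟨ha, hb⟩
        · exact Or.inl ⟨by omega, by omega⟩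
        · exact Or.inr ⟨by omega, by omega⟩
  · rintro ⟨t, ε, hε, h⟩
    have hone : |q (f t) (f (t+2))| = 1 := by
      rcases q_fib f h0 h1 hrec t with h' | h' <;> rw [h'] <;> norm_num
    rcases h with ⟨hx, hy⟩ | ⟨hx, hy⟩ <;> subst hx <;> subst hy
    · have e : q (ε * f t) (ε * f (t+2)) = q (f t) (f (t+2)) := by
        rcases hε with h | h <;> subst h <;> simp only [q] <;> ring
      rw [e]; exact hone
    · have e : q (ε * f (t+2)) (ε * f t) = q (f t) (f (t+2)) := by
        rcases hε with h | h <;> subst h <;> simp only [q] <;> ring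
      rw [e]; exact hone
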